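/- Let M be an Orlicz function and m ≥ 1, n ≥ 1 integers. Then C_∞(M, Δ_m^n) = { real sequences x = (x_k)_{k≥1} : there exists ρ > 0 with sup_{i≥1} (1/i) Σ_{k=1}^{i} M(|Δ_m^n x_k|/ρ) < ∞ } is a complete metric space with respect to the metric f₂(x,y) = Σ_{r=1}^{mn} |x_r − y_r| + inf{ ρ > 0 : sup_{i≥1} (1/i) Σ_{k=1}^{i} M(|Δ_m^n x_k − Δ_m^n y_k|/ρ) ≤ 1 }. -/

import Mathlib

/-!
Statement 8 (Paper: Proposition 3.2(ii)).  `C_∞(M, Δ_m^n)` is a complete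
metric space with respect to the metric `f₂`.  Sequences are indexed so that
`x k` represents the paper's `x_{k+1}`.
-/

open scoped ENNReal

/-- An Orlicz function. -/
def IsOrliczFunction (M : ℝ → ℝ) : Prop :=
  ContinuousOn M (Set.Ici 0) ∧ MonotoneOn M (Set.Ici 0) ∧ ConvexOn ℝ (Set.Ici 0) M ∧
    M 0 = 0 ∧ (∀ x : ℝ, 0 < x → 0 < M x) ∧ Filter.Tendsto M Filter.atTop Filter.atTop

/-- The generalized difference operator. -/
def delta (m : ℕ) : ℕ → (ℕ → ℝ) → ℕ → ℝ
  | 0, x => x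
  | n + 1, x => fun k => delta m n x k - delta m n x (k + m)

/-- The Cesàro average `(1/i) ∑_{k=1}^{i} M (|x_k| / ρ)`, where `i` here is `i+1`. -/
noncomputable def cesTerm (M : ℝ → ℝ) (x : ℕ → ℝ) (ρ : ℝ) (i : ℕ) : ℝ :=
  (1 / (i + 1 : ℝ)) * ∑ k ∈ Finset.range (i + 1), M (|x k| / ρ)

/-- `sup_{i ≥ 1} (1/i) ∑_{k=1}^{i} M (|x_k| / ρ)`, valued in `ℝ≥0∞`. -/
noncomputable def cesSup (M : ℝ → ℝ) (x : ℕ → ℝ) (ρ : ℝ) : ℝ≥0∞ :=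
  ⨆ i : ℕ, ENNReal.ofReal (cesTerm M x ρ i)

/-- The space `C_∞(M, Δ_m^n)`. -/
def CInftyMDelta (M : ℝ → ℝ) (m n : ℕ) : Set (ℕ → ℝ) :=
  {x | ∃ ρ > 0, cesSup M (delta m n x) ρ < ⊤}

/-- The metric `f₂`. -/
noncomputable def f2 (M : ℝ → ℝ) (m n : ℕ) (x y : ℕ → ℝ) : ℝ :=
  (∑ r ∈ Finset.range (m * n), |x r - y r|) +
    sInf {ρ : ℝ | 0 < ρ ∧ cesSup M (fun k => delta m n x k - delta m n y k) ρ ≤ 1}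


/- ### Auxiliary lemmas ### -/

namespace CIP

open Finset Filter

variable {M : ℝ → ℝ}

lemma M0 (hM : IsOrliczFunction M) : M 0 = 0 := hM.2.2.2.1

lemma M_nonneg (hM : IsOrliczFunction M) {t : ℝ} (ht : 0 ≤ t) : 0 ≤ M t := by
  have h := hM.2.1 (Set.mem_Ici.2 le_rfl) (Set.mem_Ici.2 ht) ht
  rwa [M0 hM] at h

lemma M_mono (hM : IsOrliczFunction M) {a b : ℝ} (ha : 0 ≤ a) (hab : a ≤ b) : M a ≤ M b :=
  hM.2.1 (Set.mem_Ici.2 ha) (Set.mem_Ici.2 (ha.trans hab)) hab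

lemma M_scale (hM : IsOrliczFunction M) {t c : ℝ} (ht : 0 ≤ t) (hc : 1 ≤ c) :
    M (t / c) ≤ M t / c := by
  have hc0 : 0 < c := lt_of_lt_of_le one_pos hc
  have h1 : (0:ℝ) ≤ 1/c := by positivity
  have h2 : (0:ℝ) ≤ 1 - 1/c := by
    have : 1/c ≤ 1 := by rw [div_le_one hc0]; exact hc
    linarith
  have hconv := hM.2.2.1.2 (Set.mem_Ici.2 ht) (Set.mem_Ici.2 (le_refl (0:ℝ)))
      h1 h2 (by ring)
  simp only [smul_eq_mul, mul_zero, M0 hM, add_zero] at hconv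
  have e1 : (1/c) * t = t / c := by ring
  rw [e1] at hconv
  calc M (t/c) ≤ 1/c * M t := hconv
    _ = M t / c := by ring

lemma M_combine (hM : IsOrliczFunction M) {s a b ρ₁ ρ₂ : ℝ} (h₁ : 0 < ρ₁) (h₂ : 0 < ρ₂)
    (hs : |s| ≤ |a| + |b|) :
    M (|s| / (ρ₁ + ρ₂)) ≤ ρ₁ / (ρ₁ + ρ₂) * M (|a| / ρ₁) + ρ₂ / (ρ₁ + ρ₂) * M (|b| / ρ₂) := by
  have hρ : 0 < ρ₁ + ρ₂ := by linarith
  have e1 : (ρ₁/(ρ₁+ρ₂)) * (|a|/ρ₁) = |a|/(ρ₁+ρ₂) := by field_simp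
  have e2 : (ρ₂/(ρ₁+ρ₂)) * (|b|/ρ₂) = |b|/(ρ₁+ρ₂) := by field_simp
  have key : |s| / (ρ₁ + ρ₂) ≤ (ρ₁/(ρ₁+ρ₂)) * (|a|/ρ₁) + (ρ₂/(ρ₁+ρ₂)) * (|b|/ρ₂) := by
    rw [e1, e2, ← add_div]
    gcongr
  have hmono := M_mono hM (div_nonneg (abs_nonneg _) hρ.le) key
  have hconv := hM.2.2.1.2 (Set.mem_Ici.2 (div_nonneg (abs_nonneg a) h₁.le))
      (Set.mem_Ici.2 (div_nonneg (abs_nonneg b) h₂.le))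
      (div_nonneg h₁.le hρ.le) (div_nonneg h₂.le hρ.le) (by field_simp)
  simp only [smul_eq_mul] at hconv
  exact hmono.trans hconv


lemma delta_sub (m n : ℕ) (x y : ℕ → ℝ) (k : ℕ) :
    delta m n (fun t => x t - y t) k = delta m n x k - delta m n y k := by
  induction n generalizing k with
  | zero => rfl
  | succ n ih => simp only [delta, ih]; ring

lemma delta_one (m : ℕ) (x : ℕ → ℝ) (k : ℕ) : delta m 1 x k = x k - x (k + m) := rfl

lemma delta_succ (m n : ℕ) (x : ℕ → ℝ) (k : ℕ) :
    delta m (n+1) x k = delta m n (delta m 1 x) k := by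
  induction n generalizing k with
  | zero => rfl
  | succ n ih =>
    show delta m (n+1) x k - delta m (n+1) x (k+m) = _
    rw [ih, ih]
    rfl

lemma delta_tendsto {y : ℕ → ℕ → ℝ} {x : ℕ → ℝ}
    (h : ∀ k, Filter.Tendsto (fun j => y j k) Filter.atTop (nhds (x k))) (m n : ℕ) :
    ∀ k, Filter.Tendsto (fun j => delta m n (y j) k) Filter.atTop (nhds (delta m n x k)) := by
  induction n with
  | zero => exact h
  | succ n ih =>
    intro k
    exact ((ih k).sub (ih (k+m)))

/-- Solving the recurrence for `n = 1`. -/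
lemma solve_one (m : ℕ) (hm : 1 ≤ m) (k : ℕ) (z : ℕ → ℝ) :
    |z k| ≤ (∑ r ∈ Finset.range m, |z r|) + ∑ j ∈ Finset.range k, |delta m 1 z j| := by
  induction k using Nat.strong_induction_on with
  | _ k ih =>
    by_cases hk : k < m
    · have h1 : |z k| ≤ ∑ r ∈ Finset.range m, |z r| :=
        Finset.single_le_sum (f := fun r => |z r|) (fun r _ => abs_nonneg _) (Finset.mem_range.2 hk)
      have h2 : (0:ℝ) ≤ ∑ j ∈ Finset.range k, |delta m 1 z j| :=
        Finset.sum_nonneg fun _ _ => abs_nonneg _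
      linarith
    · push_neg at hk
      have hm0 : 0 < m := hm
      have hk0 : 0 < k := lt_of_lt_of_le hm0 hk
      have hlt : k - m < k := Nat.sub_lt hk0 hm0
      have hkm : k - m + m = k := Nat.sub_add_cancel hk
      have hz : z k = z (k-m) - delta m 1 z (k-m) := by
        rw [delta_one, hkm]; ring
      have h1 : |z k| ≤ |z (k-m)| + |delta m 1 z (k-m)| := by
        rw [hz]; exact abs_sub _ _
      have h2 := ih (k-m) hlt
      have h3 : (∑ j ∈ Finset.range (k-m), |delta m 1 z j|) + |delta m 1 z (k-m)|
          ≤ ∑ j ∈ Finset.range k, |delta m 1 z j| := by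
        rw [← Finset.sum_range_succ]
        exact Finset.sum_le_sum_of_subset_of_nonneg
          (Finset.range_subset_range.2 hlt) (fun _ _ _ => abs_nonneg _)
      linarith

/-- Solving the recurrence: every coordinate is controlled by the first `m*n`
coordinates and the values of `delta m n`. -/
lemma solve (m : ℕ) (hm : 1 ≤ m) :
    ∀ n k : ℕ, ∃ C : ℝ, 0 ≤ C ∧ ∀ z : ℕ → ℝ,
      |z k| ≤ C * ((∑ r ∈ Finset.range (m*n), |z r|) +
        ∑ j ∈ Finset.range (k+1), |delta m n z j|) := by
  intro n
  induction n with
  | zero =>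
    intro k
    refine ⟨1, zero_le_one, fun z => ?_⟩
    have : |z k| ≤ ∑ j ∈ Finset.range (k+1), |delta m 0 z j| :=
      Finset.single_le_sum (f := fun j => |delta m 0 z j|) (fun j _ => abs_nonneg _) (Finset.mem_range.2 (Nat.lt_succ_self k))
    have h0 : (0:ℝ) ≤ ∑ r ∈ Finset.range (m*0), |z r| :=
      Finset.sum_nonneg fun _ _ => abs_nonneg _
    rw [one_mul]
    linarith
  | succ n ihn =>
    intro k
    choose Cf hCf0 hCf using ihn
    have hCsum0 : 0 ≤ ∑ j ∈ Finset.range (k+1), Cf j := Finset.sum_nonneg fun j _ => hCf0 j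
    refine ⟨1 + 2 * ∑ j ∈ Finset.range (k+1), Cf j, by linarith, fun z => ?_⟩
    set w : ℕ → ℝ := delta m 1 z with hw
    set S : ℝ := ∑ r ∈ Finset.range (m*(n+1)), |z r| with hS
    set D : ℝ := ∑ i ∈ Finset.range (k+1), |delta m (n+1) z i| with hD
    have hS0 : 0 ≤ S := Finset.sum_nonneg fun _ _ => abs_nonneg _
    have hD0 : 0 ≤ D := Finset.sum_nonneg fun _ _ => abs_nonneg _
    -- sum of |w r| over range (m*n) is ≤ 2 S
    have hwS : (∑ r ∈ Finset.range (m*n), |w r|) ≤ 2 * S := by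
      have h1 : ∀ r, |w r| ≤ |z r| + |z (r+m)| := fun r => abs_sub _ _
      calc (∑ r ∈ Finset.range (m*n), |w r|)
          ≤ ∑ r ∈ Finset.range (m*n), (|z r| + |z (r+m)|) :=
            Finset.sum_le_sum fun r _ => h1 r
        _ = (∑ r ∈ Finset.range (m*n), |z r|) + ∑ r ∈ Finset.range (m*n), |z (r+m)| :=
            Finset.sum_add_distrib
        _ ≤ S + S := by
            gcongr
            · exact Finset.sum_le_sum_of_subset_of_nonneg
                (Finset.range_subset_range.2 (by nlinarith [hm])) (fun _ _ _ => abs_nonneg _)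
            · calc (∑ r ∈ Finset.range (m*n), |z (r+m)|)
                  = ∑ s ∈ (Finset.range (m*n)).map (addRightEmbedding m), |z s| := by
                    rw [Finset.sum_map]; rfl
                _ ≤ S := by
                    apply Finset.sum_le_sum_of_subset_of_nonneg _ (fun _ _ _ => abs_nonneg _)
                    intro s hs
                    simp only [Finset.mem_map, Finset.mem_range, addRightEmbedding_apply] at hs
                    obtain ⟨r, hr, rfl⟩ := hs
                    simp only [Finset.mem_range]
                    have : m * (n+1) = m*n + m := by ring
                    omega
        _ = 2 * S := by ring
    -- from P n applied to w:
    have hwj : ∀ j ∈ Finset.range (k+1), |w j| ≤ Cf j * (2*S + D) := by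
      intro j hj
      have hj' : j < k + 1 := Finset.mem_range.1 hj
      have h1 := hCf j w
      have h2 : (∑ i ∈ Finset.range (j+1), |delta m n w i|) ≤ D := by
        rw [hD]
        have : ∀ i, delta m n w i = delta m (n+1) z i := by
          intro i; rw [hw, ← delta_succ]
        simp only [this]
        exact Finset.sum_le_sum_of_subset_of_nonneg
          (Finset.range_subset_range.2 (by omega)) (fun _ _ _ => abs_nonneg _)
      calc |w j| ≤ Cf j * ((∑ r ∈ Finset.range (m*n), |w r|) +
            ∑ i ∈ Finset.range (j+1), |delta m n w i|) := h1
        _ ≤ Cf j * (2*S + D) := by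
            apply mul_le_mul_of_nonneg_left _ (hCf0 j)
            exact add_le_add hwS h2
    -- n = 1 step
    have hone := solve_one m hm k z
    have hSm : (∑ r ∈ Finset.range m, |z r|) ≤ S :=
      Finset.sum_le_sum_of_subset_of_nonneg
        (Finset.range_subset_range.2 (by nlinarith [hm])) (fun _ _ _ => abs_nonneg _)
    have hwsum : (∑ j ∈ Finset.range k, |w j|) ≤ (∑ j ∈ Finset.range (k+1), Cf j) * (2*S + D) := by
      calc (∑ j ∈ Finset.range k, |w j|) ≤ ∑ j ∈ Finset.range (k+1), |w j| :=
            Finset.sum_le_sum_of_subset_of_nonneg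
              (Finset.range_subset_range.2 (by omega)) (fun _ _ _ => abs_nonneg _)
        _ ≤ ∑ j ∈ Finset.range (k+1), Cf j * (2*S + D) := Finset.sum_le_sum hwj
        _ = (∑ j ∈ Finset.range (k+1), Cf j) * (2*S + D) := by rw [Finset.sum_mul]
    have hCsum : 0 ≤ ∑ j ∈ Finset.range (k+1), Cf j := Finset.sum_nonneg fun j _ => hCf0 j
    calc |z k| ≤ (∑ r ∈ Finset.range m, |z r|) + ∑ j ∈ Finset.range k, |w j| := hone
      _ ≤ S + (∑ j ∈ Finset.range (k+1), Cf j) * (2*S + D) := add_le_add hSm hwsum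
      _ ≤ (1 + 2 * ∑ j ∈ Finset.range (k+1), Cf j) * (S + D) := by nlinarith

/-- The Luxemburg set. -/
def luxSet (M : ℝ → ℝ) (z : ℕ → ℝ) : Set ℝ := {ρ : ℝ | 0 < ρ ∧ cesSup M z ρ ≤ 1}

/-- The Luxemburg "norm". -/
noncomputable def lux (M : ℝ → ℝ) (z : ℕ → ℝ) : ℝ := sInf (luxSet M z)

lemma luxSet_bddBelow (z : ℕ → ℝ) : BddBelow (luxSet M z) :=
  ⟨0, fun _ h => h.1.le⟩

lemma lux_nonneg (z : ℕ → ℝ) : 0 ≤ lux M z :=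
  Real.sInf_nonneg fun _ h => h.1.le

lemma cesSup_le_one_iff {z : ℕ → ℝ} {ρ : ℝ} :
    cesSup M z ρ ≤ 1 ↔ ∀ i, cesTerm M z ρ i ≤ 1 := by
  simp [cesSup, iSup_le_iff, ENNReal.ofReal_le_one]

lemma cesTerm_nonneg (hM : IsOrliczFunction M) {z : ℕ → ℝ} {ρ : ℝ} (hρ : 0 < ρ) (i : ℕ) :
    0 ≤ cesTerm M z ρ i := by
  apply mul_nonneg (by positivity)
  exact Finset.sum_nonneg fun k _ => M_nonneg hM (div_nonneg (abs_nonneg _) hρ.le)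

lemma term_le (hM : IsOrliczFunction M) {z : ℕ → ℝ} {ρ : ℝ} (hρ : 0 < ρ)
    (h : ∀ i, cesTerm M z ρ i ≤ 1) (k : ℕ) : M (|z k| / ρ) ≤ (k : ℝ) + 1 := by
  have h1 := h k
  have hk1 : (0:ℝ) < (k:ℝ) + 1 := by positivity
  have hsum : (∑ j ∈ Finset.range (k+1), M (|z j| / ρ)) ≤ (k:ℝ) + 1 := by
    unfold cesTerm at h1
    rw [div_mul_eq_mul_div, one_mul, div_le_one hk1] at h1
    exact h1
  have hsingle : M (|z k| / ρ) ≤ ∑ j ∈ Finset.range (k+1), M (|z j| / ρ) :=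
    Finset.single_le_sum (f := fun j => M (|z j| / ρ))
      (fun j _ => M_nonneg hM (div_nonneg (abs_nonneg _) hρ.le))
      (Finset.mem_range.2 (Nat.lt_succ_self k))
  linarith

lemma coordBound (hM : IsOrliczFunction M) (k : ℕ) :
    ∃ T : ℝ, 0 < T ∧ ∀ z : ℕ → ℝ, ∀ ρ ∈ luxSet M z, |z k| ≤ T * ρ := by
  obtain ⟨T, hT⟩ := Filter.eventually_atTop.1 (hM.2.2.2.2.2.eventually_ge_atTop ((k:ℝ)+2))
  refine ⟨max T 1, lt_of_lt_of_le one_pos (le_max_right _ _), fun z ρ hρ => ?_⟩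
  by_contra hcon
  push_neg at hcon
  have hρ0 := hρ.1
  have hdiv : max T 1 < |z k| / ρ := by
    rw [lt_div_iff₀ hρ0]; linarith
  have hTle : T ≤ |z k| / ρ := le_trans (le_max_left _ _) hdiv.le
  have h1 := hT _ hTle
  have h2 := term_le hM hρ0 (cesSup_le_one_iff.1 hρ.2) k
  linarith

lemma coord_le_lux (hM : IsOrliczFunction M) (k : ℕ) :
    ∃ T : ℝ, 0 < T ∧ ∀ z : ℕ → ℝ, (luxSet M z).Nonempty → |z k| ≤ T * lux M z := by
  obtain ⟨T, hT0, hT⟩ := coordBound hM k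
  refine ⟨T, hT0, fun z hne => ?_⟩
  have h1 : |z k| / T ≤ lux M z := by
    apply le_csInf hne
    intro ρ hρ
    rw [div_le_iff₀ hT0]
    calc |z k| ≤ T * ρ := hT z ρ hρ
      _ = ρ * T := mul_comm _ _
  calc |z k| = (|z k| / T) * T := by field_simp
    _ ≤ lux M z * T := mul_le_mul_of_nonneg_right h1 hT0.le
    _ = T * lux M z := mul_comm _ _

lemma luxSet_mono (hM : IsOrliczFunction M) {z : ℕ → ℝ} {ρ ρ' : ℝ}
    (h : ρ ∈ luxSet M z) (hle : ρ ≤ ρ') : ρ' ∈ luxSet M z := by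
  have hρ0 := h.1
  have hρ'0 : 0 < ρ' := lt_of_lt_of_le hρ0 hle
  refine ⟨hρ'0, cesSup_le_one_iff.2 fun i => ?_⟩
  have h2 := cesSup_le_one_iff.1 h.2 i
  refine le_trans ?_ h2
  unfold cesTerm
  apply mul_le_mul_of_nonneg_left _ (by positivity)
  apply Finset.sum_le_sum
  intro j _
  apply M_mono hM (div_nonneg (abs_nonneg _) hρ'0.le)
  gcongr

lemma cesTerm_combine (hM : IsOrliczFunction M) {s a b : ℕ → ℝ} {ρ₁ ρ₂ : ℝ}
    (h₁ : 0 < ρ₁) (h₂ : 0 < ρ₂) (hs : ∀ k, |s k| ≤ |a k| + |b k|) (i : ℕ) :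
    cesTerm M s (ρ₁ + ρ₂) i ≤
      ρ₁/(ρ₁+ρ₂) * cesTerm M a ρ₁ i + ρ₂/(ρ₁+ρ₂) * cesTerm M b ρ₂ i := by
  have hi : (0:ℝ) ≤ 1/((i:ℝ)+1) := by positivity
  unfold cesTerm
  calc (1/((i:ℝ)+1)) * ∑ k ∈ Finset.range (i+1), M (|s k| / (ρ₁+ρ₂))
      ≤ (1/((i:ℝ)+1)) * ∑ k ∈ Finset.range (i+1),
          (ρ₁/(ρ₁+ρ₂) * M (|a k| / ρ₁) + ρ₂/(ρ₁+ρ₂) * M (|b k| / ρ₂)) := by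
        apply mul_le_mul_of_nonneg_left _ hi
        exact Finset.sum_le_sum fun k _ => M_combine hM h₁ h₂ (hs k)
    _ = ρ₁/(ρ₁+ρ₂) * ((1/((i:ℝ)+1)) * ∑ k ∈ Finset.range (i+1), M (|a k| / ρ₁)) +
        ρ₂/(ρ₁+ρ₂) * ((1/((i:ℝ)+1)) * ∑ k ∈ Finset.range (i+1), M (|b k| / ρ₂)) := by
        rw [Finset.sum_add_distrib, ← Finset.mul_sum, ← Finset.mul_sum]
        ring

lemma cesSup_lt_top_iff (hM : IsOrliczFunction M) {z : ℕ → ℝ} {ρ : ℝ} (hρ : 0 < ρ) :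
    cesSup M z ρ < ⊤ ↔ ∃ K : ℝ, ∀ i, cesTerm M z ρ i ≤ K := by
  constructor
  · intro h
    refine ⟨(cesSup M z ρ).toReal, fun i => ?_⟩
    have h1 : ENNReal.ofReal (cesTerm M z ρ i) ≤ cesSup M z ρ := le_iSup (fun i => ENNReal.ofReal (cesTerm M z ρ i)) i
    have h2 : cesTerm M z ρ i = (ENNReal.ofReal (cesTerm M z ρ i)).toReal := by
      rw [ENNReal.toReal_ofReal (cesTerm_nonneg hM hρ i)]
    rw [h2]
    exact ENNReal.toReal_mono h.ne h1
  · rintro ⟨K, hK⟩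
    have : cesSup M z ρ ≤ ENNReal.ofReal K := by
      apply iSup_le
      intro i
      exact ENNReal.ofReal_le_ofReal (hK i)
    exact lt_of_le_of_lt this ENNReal.ofReal_lt_top

lemma luxSet_nonempty_of_lt_top (hM : IsOrliczFunction M) {z : ℕ → ℝ} {ρ₀ : ℝ}
    (h0 : 0 < ρ₀) (h : cesSup M z ρ₀ < ⊤) : (luxSet M z).Nonempty := by
  obtain ⟨K, hK⟩ := (cesSup_lt_top_iff hM h0).1 h
  set c : ℝ := max K 1 with hc
  have hc1 : 1 ≤ c := le_max_right _ _
  have hc0 : 0 < c := lt_of_lt_of_le one_pos hc1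
  refine ⟨c * ρ₀, ⟨by positivity, cesSup_le_one_iff.2 fun i => ?_⟩⟩
  have key : ∀ k, M (|z k| / (c * ρ₀)) ≤ M (|z k| / ρ₀) / c := by
    intro k
    have : |z k| / (c * ρ₀) = (|z k| / ρ₀) / c := by
      rw [div_div]; ring_nf
    rw [this]
    exact M_scale hM (div_nonneg (abs_nonneg _) h0.le) hc1
  calc cesTerm M z (c * ρ₀) i
      ≤ (1/((i:ℝ)+1)) * ∑ k ∈ Finset.range (i+1), (M (|z k| / ρ₀) / c) := by
        unfold cesTerm
        apply mul_le_mul_of_nonneg_left _ (by positivity)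
        exact Finset.sum_le_sum fun k _ => key k
    _ = cesTerm M z ρ₀ i / c := by
        unfold cesTerm
        rw [← Finset.sum_div]
        ring
    _ ≤ K / c := by gcongr; exact hK i
    _ ≤ c / c := by gcongr; exact le_max_left _ _
    _ = 1 := div_self hc0.ne'

lemma cesSup_sub_lt_top (hM : IsOrliczFunction M) {a b : ℕ → ℝ} {ρ₁ ρ₂ : ℝ}
    (h₁ : 0 < ρ₁) (h₂ : 0 < ρ₂)
    (ha : cesSup M a ρ₁ < ⊤) (hb : cesSup M b ρ₂ < ⊤) :
    cesSup M (fun k => a k - b k) (ρ₁ + ρ₂) < ⊤ := by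
  obtain ⟨K₁, hK₁⟩ := (cesSup_lt_top_iff hM h₁).1 ha
  obtain ⟨K₂, hK₂⟩ := (cesSup_lt_top_iff hM h₂).1 hb
  rw [cesSup_lt_top_iff hM (by linarith)]
  refine ⟨ρ₁/(ρ₁+ρ₂) * K₁ + ρ₂/(ρ₁+ρ₂) * K₂, fun i => ?_⟩
  have hcomb := cesTerm_combine hM (s := fun k => a k - b k) h₁ h₂
    (fun k => abs_sub _ _) i
  have c1 : (0:ℝ) ≤ ρ₁/(ρ₁+ρ₂) := by positivity
  have c2 : (0:ℝ) ≤ ρ₂/(ρ₁+ρ₂) := by positivity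
  calc cesTerm M (fun k => a k - b k) (ρ₁+ρ₂) i
      ≤ ρ₁/(ρ₁+ρ₂) * cesTerm M a ρ₁ i + ρ₂/(ρ₁+ρ₂) * cesTerm M b ρ₂ i := hcomb
    _ ≤ ρ₁/(ρ₁+ρ₂) * K₁ + ρ₂/(ρ₁+ρ₂) * K₂ := by
        apply add_le_add
        · exact mul_le_mul_of_nonneg_left (hK₁ i) c1
        · exact mul_le_mul_of_nonneg_left (hK₂ i) c2

lemma luxSet_add (hM : IsOrliczFunction M) {a b s : ℕ → ℝ} {ρ₁ ρ₂ : ℝ}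
    (hs : ∀ k, |s k| ≤ |a k| + |b k|)
    (ha : ρ₁ ∈ luxSet M a) (hb : ρ₂ ∈ luxSet M b) : ρ₁ + ρ₂ ∈ luxSet M s := by
  have h₁ := ha.1; have h₂ := hb.1
  refine ⟨by linarith, cesSup_le_one_iff.2 fun i => ?_⟩
  have hcomb := cesTerm_combine hM (s := s) h₁ h₂ hs i
  have ha' := cesSup_le_one_iff.1 ha.2 i
  have hb' := cesSup_le_one_iff.1 hb.2 i
  have c1 : (0:ℝ) ≤ ρ₁/(ρ₁+ρ₂) := by positivity
  have c2 : (0:ℝ) ≤ ρ₂/(ρ₁+ρ₂) := by positivity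
  have : ρ₁/(ρ₁+ρ₂) * cesTerm M a ρ₁ i + ρ₂/(ρ₁+ρ₂) * cesTerm M b ρ₂ i
      ≤ ρ₁/(ρ₁+ρ₂) * 1 + ρ₂/(ρ₁+ρ₂) * 1 := by
    apply add_le_add
    · exact mul_le_mul_of_nonneg_left ha' c1
    · exact mul_le_mul_of_nonneg_left hb' c2
  have hsum : ρ₁/(ρ₁+ρ₂) * 1 + ρ₂/(ρ₁+ρ₂) * 1 = 1 := by
    field_simp
  linarith

lemma lux_triangle (hM : IsOrliczFunction M) {a b s : ℕ → ℝ}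
    (hs : ∀ k, |s k| ≤ |a k| + |b k|)
    (hane : (luxSet M a).Nonempty) (hbne : (luxSet M b).Nonempty) :
    lux M s ≤ lux M a + lux M b := by
  have key : ∀ ρ₁ ∈ luxSet M a, ∀ ρ₂ ∈ luxSet M b, lux M s ≤ ρ₁ + ρ₂ := by
    intro ρ₁ h₁ ρ₂ h₂
    exact csInf_le (luxSet_bddBelow s) (luxSet_add hM hs h₁ h₂)
  have step1 : ∀ ρ₁ ∈ luxSet M a, lux M s - ρ₁ ≤ lux M b := by
    intro ρ₁ h₁
    apply le_csInf hbne
    intro ρ₂ h₂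
    linarith [key ρ₁ h₁ ρ₂ h₂]
  have step2 : lux M s - lux M b ≤ lux M a := by
    apply le_csInf hane
    intro ρ₁ h₁
    linarith [step1 ρ₁ h₁]
  linarith

lemma cesSup_zero_fun (hM : IsOrliczFunction M) (ρ : ℝ) :
    cesSup M (fun _ => (0:ℝ)) ρ = 0 := by
  have : ∀ i, cesTerm M (fun _ => (0:ℝ)) ρ i = 0 := by
    intro i
    unfold cesTerm
    simp [M0 hM]
  simp [cesSup, this]

lemma lux_zero_fun (hM : IsOrliczFunction M) : lux M (fun _ => (0:ℝ)) = 0 := by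
  have hset : luxSet M (fun _ => (0:ℝ)) = Set.Ioi 0 := by
    ext ρ
    simp [luxSet, cesSup_zero_fun hM, Set.mem_Ioi]
  unfold lux
  rw [hset, csInf_Ioi]


lemma cesSup_congr_abs {z w : ℕ → ℝ} (h : ∀ k, |z k| = |w k|) (ρ : ℝ) :
    cesSup M z ρ = cesSup M w ρ := by
  simp only [cesSup, cesTerm, h]

lemma lux_congr_abs {z w : ℕ → ℝ} (h : ∀ k, |z k| = |w k|) : lux M z = lux M w := by
  unfold lux luxSet
  simp only [cesSup_congr_abs h]

end CIP

namespace CIP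

variable {M : ℝ → ℝ}

lemma f2_eq (M : ℝ → ℝ) (m n : ℕ) (x y : ℕ → ℝ) :
    f2 M m n x y = (∑ r ∈ Finset.range (m * n), |x r - y r|) +
      lux M (fun k => delta m n x k - delta m n y k) := rfl

lemma f2_nonneg (M : ℝ → ℝ) (m n : ℕ) (x y : ℕ → ℝ) : 0 ≤ f2 M m n x y := by
  rw [f2_eq]
  exact add_nonneg (Finset.sum_nonneg fun _ _ => abs_nonneg _) (lux_nonneg _)

lemma prefix_le_f2 (M : ℝ → ℝ) (m n : ℕ) (x y : ℕ → ℝ) :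
    (∑ r ∈ Finset.range (m * n), |x r - y r|) ≤ f2 M m n x y := by
  rw [f2_eq]
  linarith [lux_nonneg (M := M) (fun k => delta m n x k - delta m n y k)]

lemma lux_le_f2 (M : ℝ → ℝ) (m n : ℕ) (x y : ℕ → ℝ) :
    lux M (fun k => delta m n x k - delta m n y k) ≤ f2 M m n x y := by
  rw [f2_eq]
  have : (0:ℝ) ≤ ∑ r ∈ Finset.range (m * n), |x r - y r| :=
    Finset.sum_nonneg fun _ _ => abs_nonneg _
  linarith

lemma key_lip (hM : IsOrliczFunction M) (m n : ℕ) (hm : 1 ≤ m) (k : ℕ) :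
    ∃ C : ℝ, 0 ≤ C ∧ ∀ x y : ℕ → ℝ,
      (luxSet M (fun t => delta m n x t - delta m n y t)).Nonempty →
      |x k - y k| ≤ C * f2 M m n x y := by
  obtain ⟨C, hC0, hC⟩ := solve m hm n k
  choose T hT0 hT using fun j => coord_le_lux (M := M) hM j
  have hTsum : 0 ≤ ∑ j ∈ Finset.range (k+1), T j :=
    Finset.sum_nonneg fun j _ => (hT0 j).le
  refine ⟨C * (1 + ∑ j ∈ Finset.range (k+1), T j), by positivity, fun x y hne => ?_⟩
  set Dz : ℕ → ℝ := fun t => delta m n x t - delta m n y t with hDz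
  set z : ℕ → ℝ := fun t => x t - y t with hz
  have hdz : ∀ t, delta m n z t = Dz t := fun t => delta_sub m n x y t
  have hf20 := f2_nonneg M m n x y
  have hpre := prefix_le_f2 M m n x y
  have hluxf2 := lux_le_f2 M m n x y
  have hlux0 : 0 ≤ lux M Dz := lux_nonneg _
  have h1 := hC z
  have h2 : (∑ j ∈ Finset.range (k+1), |delta m n z j|) ≤
      (∑ j ∈ Finset.range (k+1), T j) * f2 M m n x y := by
    calc (∑ j ∈ Finset.range (k+1), |delta m n z j|)
        = ∑ j ∈ Finset.range (k+1), |Dz j| := by simp only [hdz]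
      _ ≤ ∑ j ∈ Finset.range (k+1), T j * lux M Dz :=
          Finset.sum_le_sum fun j _ => hT j Dz hne
      _ = (∑ j ∈ Finset.range (k+1), T j) * lux M Dz := by rw [Finset.sum_mul]
      _ ≤ (∑ j ∈ Finset.range (k+1), T j) * f2 M m n x y :=
          mul_le_mul_of_nonneg_left hluxf2 hTsum
  have h3 : (∑ r ∈ Finset.range (m*n), |z r|) ≤ f2 M m n x y := hpre
  calc |x k - y k| = |z k| := rfl
    _ ≤ C * ((∑ r ∈ Finset.range (m*n), |z r|) +
        ∑ j ∈ Finset.range (k+1), |delta m n z j|) := h1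
    _ ≤ C * (f2 M m n x y + (∑ j ∈ Finset.range (k+1), T j) * f2 M m n x y) := by
        apply mul_le_mul_of_nonneg_left _ hC0
        exact add_le_add h3 h2
    _ = C * (1 + ∑ j ∈ Finset.range (k+1), T j) * f2 M m n x y := by ring

end CIP

theorem CInftyDelta_complete_metric (M : ℝ → ℝ) (hM : IsOrliczFunction M)
    (m n : ℕ) (hm : 1 ≤ m) (hn : 1 ≤ n) :
    ∃ inst : MetricSpace (CInftyMDelta M m n),
      (∀ a b : CInftyMDelta M m n, @dist _ inst.toDist a b = f2 M m n a.1 b.1) ∧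
        @CompleteSpace _ inst.toUniformSpace := by
  classical
  have hpairne : ∀ x y : ℕ → ℝ, x ∈ CInftyMDelta M m n → y ∈ CInftyMDelta M m n →
      (CIP.luxSet M (fun k => delta m n x k - delta m n y k)).Nonempty := by
    intro x y hx hy
    obtain ⟨ρ₁, h₁, hf₁⟩ := hx
    obtain ⟨ρ₂, h₂, hf₂⟩ := hy
    exact CIP.luxSet_nonempty_of_lt_top hM (by linarith)
      (CIP.cesSup_sub_lt_top hM h₁ h₂ hf₁ hf₂)
  -- dist_self
  have hself : ∀ a : CInftyMDelta M m n, f2 M m n a.1 a.1 = 0 := by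
    intro a
    rw [CIP.f2_eq]
    have h1 : (fun k => delta m n a.1 k - delta m n a.1 k) = (fun _ => (0:ℝ)) := by
      funext k; ring
    rw [h1, CIP.lux_zero_fun hM]
    simp
  -- dist_comm
  have hcomm : ∀ a b : CInftyMDelta M m n, f2 M m n a.1 b.1 = f2 M m n b.1 a.1 := by
    intro a b
    rw [CIP.f2_eq, CIP.f2_eq]
    congr 1
    · exact Finset.sum_congr rfl fun r _ => abs_sub_comm _ _
    · exact CIP.lux_congr_abs fun k => abs_sub_comm _ _
  -- triangle
  have htri : ∀ a b c : CInftyMDelta M m n,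
      f2 M m n a.1 c.1 ≤ f2 M m n a.1 b.1 + f2 M m n b.1 c.1 := by
    intro a b c
    rw [CIP.f2_eq, CIP.f2_eq, CIP.f2_eq]
    have hpre : (∑ r ∈ Finset.range (m*n), |a.1 r - c.1 r|) ≤
        (∑ r ∈ Finset.range (m*n), |a.1 r - b.1 r|) +
        ∑ r ∈ Finset.range (m*n), |b.1 r - c.1 r| := by
      rw [← Finset.sum_add_distrib]
      exact Finset.sum_le_sum fun r _ => abs_sub_le _ _ _
    have hlux : CIP.lux M (fun k => delta m n a.1 k - delta m n c.1 k) ≤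
        CIP.lux M (fun k => delta m n a.1 k - delta m n b.1 k) +
        CIP.lux M (fun k => delta m n b.1 k - delta m n c.1 k) := by
      apply CIP.lux_triangle hM (fun k => abs_sub_le _ _ _)
        (hpairne _ _ a.2 b.2) (hpairne _ _ b.2 c.2)
    linarith
  -- eq of f2 = 0
  have heq0 : ∀ a b : CInftyMDelta M m n, f2 M m n a.1 b.1 = 0 → a = b := by
    intro a b h
    have hpre0 : (0:ℝ) ≤ ∑ r ∈ Finset.range (m*n), |a.1 r - b.1 r| :=
      Finset.sum_nonneg fun _ _ => abs_nonneg _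
    have hlux0 := CIP.lux_nonneg (M := M) (fun k => delta m n a.1 k - delta m n b.1 k)
    rw [CIP.f2_eq] at h
    have hpre : (∑ r ∈ Finset.range (m*n), |a.1 r - b.1 r|) = 0 := by linarith
    have hlux : CIP.lux M (fun k => delta m n a.1 k - delta m n b.1 k) = 0 := by linarith
    have hne := hpairne _ _ a.2 b.2
    have hD : ∀ k, delta m n a.1 k - delta m n b.1 k = 0 := by
      intro k
      obtain ⟨T, hT0, hT⟩ := CIP.coord_le_lux (M := M) hM k
      have := hT _ hne
      rw [hlux, mul_zero] at this
      have habs := abs_nonneg (delta m n a.1 k - delta m n b.1 k)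
      have : |delta m n a.1 k - delta m n b.1 k| = 0 := le_antisymm this habs
      exact abs_eq_zero.1 this
    have hprez : ∀ r ∈ Finset.range (m*n), |a.1 r - b.1 r| = 0 := by
      intro r hr
      exact (Finset.sum_eq_zero_iff_of_nonneg fun _ _ => abs_nonneg _).1 hpre r hr
    apply Subtype.ext
    funext k
    obtain ⟨C, hC0, hC⟩ := CIP.solve m hm n k
    have h1 := hC (fun t => a.1 t - b.1 t)
    have h2 : (∑ r ∈ Finset.range (m*n), |a.1 r - b.1 r|) = 0 := hpre
    have h3 : (∑ j ∈ Finset.range (k+1), |delta m n (fun t => a.1 t - b.1 t) j|) = 0 := by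
      apply Finset.sum_eq_zero
      intro j _
      rw [CIP.delta_sub, hD j, abs_zero]
    rw [h2, h3] at h1
    simp only [add_zero, mul_zero] at h1
    have habs := abs_nonneg (a.1 k - b.1 k)
    have : |a.1 k - b.1 k| = 0 := le_antisymm h1 habs
    have := abs_eq_zero.1 this
    linarith
  letI inst : MetricSpace (CInftyMDelta M m n) :=
    { dist := fun a b => f2 M m n a.1 b.1
      dist_self := hself
      dist_comm := hcomm
      dist_triangle := htri
      eq_of_dist_eq_zero := fun {a b} h => heq0 a b h }
  refine ⟨inst, fun a b => rfl, ?_⟩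
  apply Metric.complete_of_cauchySeq_tendsto
  intro u hu
  have hcauchy : ∀ ε > (0:ℝ), ∃ N, ∀ j ≥ N, ∀ l ≥ N, f2 M m n (u j).1 (u l).1 < ε := by
    intro ε hε
    obtain ⟨N, hN⟩ := Metric.cauchySeq_iff.1 hu ε hε
    exact ⟨N, fun j hj l hl => hN j hj l hl⟩
  -- coordinatewise Cauchy and limits
  have hcoord : ∀ k, ∃ L : ℝ, Filter.Tendsto (fun j => (u j).1 k) Filter.atTop (nhds L) := by
    intro k
    apply cauchySeq_tendsto_of_complete
    rw [Metric.cauchySeq_iff]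
    intro δ hδ
    obtain ⟨C, hC0, hC⟩ := CIP.key_lip hM m n hm k
    obtain ⟨N, hN⟩ := hcauchy (δ/(C+1)) (by positivity)
    refine ⟨N, fun a ha b hb => ?_⟩
    have h1 := hC (u a).1 (u b).1 (hpairne _ _ (u a).2 (u b).2)
    have h2 := hN a ha b hb
    have hf20 := CIP.f2_nonneg M m n (u a).1 (u b).1
    rw [Real.dist_eq]
    calc |(u a).1 k - (u b).1 k| ≤ C * f2 M m n (u a).1 (u b).1 := h1
      _ ≤ (C+1) * f2 M m n (u a).1 (u b).1 :=
          mul_le_mul_of_nonneg_right (by linarith) hf20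
      _ < (C+1) * (δ/(C+1)) := mul_lt_mul_of_pos_left h2 (by linarith)
      _ = δ := by field_simp
  choose x hx using hcoord
  have hdel : ∀ k, Filter.Tendsto (fun j => delta m n (u j).1 k) Filter.atTop
      (nhds (delta m n x k)) := CIP.delta_tendsto hx m n
  -- the main estimate
  have main : ∀ ε > (0:ℝ), ∃ N : ℕ, ∀ j ≥ N,
      (∑ r ∈ Finset.range (m*n), |(u j).1 r - x r|) ≤ ε ∧
      ε ∈ CIP.luxSet M (fun k => delta m n (u j).1 k - delta m n x k) := by
    intro ε hε
    obtain ⟨N, hN⟩ := hcauchy (ε/2) (by positivity)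
    refine ⟨N, fun j hj => ?_⟩
    have hpre : ∀ l ≥ N, (∑ r ∈ Finset.range (m*n), |(u j).1 r - (u l).1 r|) ≤ ε := by
      intro l hl
      have h := hN j hj l hl
      have h2 := CIP.prefix_le_f2 M m n (u j).1 (u l).1
      linarith
    have hces : ∀ l ≥ N, ∀ i,
        cesTerm M (fun k => delta m n (u j).1 k - delta m n (u l).1 k) ε i ≤ 1 := by
      intro l hl
      have h := hN j hj l hl
      have hne := hpairne _ _ (u j).2 (u l).2
      have hluxf2 := CIP.lux_le_f2 M m n (u j).1 (u l).1
      have hlux : CIP.lux M (fun k => delta m n (u j).1 k - delta m n (u l).1 k) < ε/2 := by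
        linarith
      obtain ⟨ρ, hρmem, hρlt⟩ := exists_lt_of_csInf_lt hne hlux
      have hmem := CIP.luxSet_mono hM hρmem (by linarith : ρ ≤ ε)
      exact fun i => CIP.cesSup_le_one_iff.1 hmem.2 i
    constructor
    · have htend : Filter.Tendsto (fun l => ∑ r ∈ Finset.range (m*n), |(u j).1 r - (u l).1 r|)
          Filter.atTop (nhds (∑ r ∈ Finset.range (m*n), |(u j).1 r - x r|)) := by
        apply tendsto_finset_sum
        intro r _
        exact (tendsto_const_nhds.sub (hx r)).abs
      exact le_of_tendsto htend (Filter.eventually_atTop.2 ⟨N, hpre⟩)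
    · refine ⟨hε, CIP.cesSup_le_one_iff.2 fun i => ?_⟩
      have htend : Filter.Tendsto
          (fun l => cesTerm M (fun k => delta m n (u j).1 k - delta m n (u l).1 k) ε i)
          Filter.atTop
          (nhds (cesTerm M (fun k => delta m n (u j).1 k - delta m n x k) ε i)) := by
        unfold cesTerm
        apply Filter.Tendsto.const_mul
        apply tendsto_finset_sum
        intro k _
        have harg : Filter.Tendsto
            (fun l => |delta m n (u j).1 k - delta m n ((u l).1) k| / ε) Filter.atTop
            (nhds (|delta m n (u j).1 k - delta m n x k| / ε)) :=
          ((tendsto_const_nhds.sub (hdel k)).abs).div_const ε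
        have hcw : ContinuousWithinAt M (Set.Ici 0)
            (|delta m n (u j).1 k - delta m n x k| / ε) :=
          hM.1 _ (Set.mem_Ici.2 (by positivity))
        exact hcw.tendsto.comp (tendsto_nhdsWithin_of_tendsto_nhds_of_eventually_within _ harg
          (Filter.Eventually.of_forall fun l => Set.mem_Ici.2 (by positivity)))
      exact le_of_tendsto htend (Filter.eventually_atTop.2 ⟨N, fun l hl => hces l hl i⟩)
  -- x belongs to the space
  obtain ⟨N₁, hN₁⟩ := main 1 one_pos
  obtain ⟨ρ₀, hρ₀, hfin⟩ := (u N₁).2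
  have hmem1 := (hN₁ N₁ le_rfl).2
  have hfin2 : cesSup M (fun k => delta m n (u N₁).1 k - delta m n x k) 1 < ⊤ :=
    lt_of_le_of_lt hmem1.2 ENNReal.one_lt_top
  have hcomb := CIP.cesSup_sub_lt_top hM hρ₀ one_pos hfin hfin2
  have hcomb' : cesSup M (delta m n x) (ρ₀ + 1) < ⊤ := by
    have heq : (fun k => delta m n (u N₁).1 k -
        (fun k => delta m n (u N₁).1 k - delta m n x k) k) = delta m n x := by
      funext k
      simp only []
      ring
    rwa [heq] at hcomb
  have hxmem : x ∈ CInftyMDelta M m n := ⟨ρ₀ + 1, by linarith, hcomb'⟩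
  refine ⟨⟨x, hxmem⟩, ?_⟩
  rw [Metric.tendsto_atTop]
  intro ε hε
  obtain ⟨N, hN⟩ := main (ε/4) (by positivity)
  refine ⟨N, fun j hj => ?_⟩
  have h := hN j hj
  have hlux : CIP.lux M (fun k => delta m n (u j).1 k - delta m n x k) ≤ ε/4 :=
    csInf_le (CIP.luxSet_bddBelow _) h.2
  have hdisteq : dist (u j) (⟨x, hxmem⟩ : CInftyMDelta M m n) =
      (∑ r ∈ Finset.range (m*n), |(u j).1 r - x r|) +
      CIP.lux M (fun k => delta m n (u j).1 k - delta m n x k) := rfl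
  rw [hdisteq]
  calc (∑ r ∈ Finset.range (m*n), |(u j).1 r - x r|) +
      CIP.lux M (fun k => delta m n (u j).1 k - delta m n x k) ≤ ε/4 + ε/4 :=
        add_le_add h.1 hlux
    _ < ε := by linarith
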